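/- Let P be a smooth manifold (finite-dimensional, Hausdorff, paracompact), let 𝒰 ⊆ P be an open subset with its induced smooth manifold structure, let p ∈ 𝒰, and let A be a local algebra with residue homomorphism 0_A : A → ℝ. Then the map that sends an identity-preserving ℝ-algebra homomorphism u : C^∞(𝒰) → A with 0_A ∘ u = ev_p to the homomorphism f ↦ u(f|_𝒰) on C^∞(P) is a bijection from the set A_p𝒰 = { u : C^∞(𝒰) → A algebra homomorphism : 0_A ∘ u = ev_p } onto the set A_pP = { v : C^∞(P) → A algebra homomorphism : 0_A ∘ v = ev_p }. -/

import Mathlib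

open scoped Manifold
open TopologicalSpace

/-- Restriction of smooth real-valued functions on `P` to an open subset `U`, as an
`ℝ`-algebra homomorphism `C^∞(P) → C^∞(U)`. -/
noncomputable def smoothRestrictAlgHom
    (E : Type) [NormedAddCommGroup E] [NormedSpace ℝ E]
    (H : Type) [TopologicalSpace H] (I : ModelWithCorners ℝ E H)
    (P : Type) [TopologicalSpace P] [ChartedSpace H P]
    (U : Opens P) :
    (ContMDiffMap I 𝓘(ℝ, ℝ) P ℝ (⊤ : ℕ∞)) →ₐ[ℝ] (ContMDiffMap I 𝓘(ℝ, ℝ) U ℝ (⊤ : ℕ∞)) where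
  toFun f := ⟨fun x => f x, f.contMDiff.comp contMDiff_subtype_val⟩
  map_one' := by ext x; rfl
  map_mul' f g := by ext x; rfl
  map_zero' := by ext x; rfl
  map_add' f g := by ext x; rfl
  commutes' r := by ext x; rfl

section Aux

variable {E : Type} [NormedAddCommGroup E] [NormedSpace ℝ E]
  {H : Type} [TopologicalSpace H] {I : ModelWithCorners ℝ E H}
  {P : Type} [TopologicalSpace P] [ChartedSpace H P] [T2Space P]
  {U : Opens P} {χ : P → ℝ}

/-- Extension by zero of `χ · g` from an open set to the whole manifold. -/
noncomputable def extBump (hχ : ContMDiff I 𝓘(ℝ, ℝ) (⊤ : ℕ∞) χ)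
    (hχc : HasCompactSupport χ) (hχU : tsupport χ ⊆ (U : Set P))
    (g : ContMDiffMap I 𝓘(ℝ, ℝ) U ℝ (⊤ : ℕ∞)) : ContMDiffMap I 𝓘(ℝ, ℝ) P ℝ (⊤ : ℕ∞) := by
  refine ⟨Function.extend Subtype.val (fun x : U => χ x * g x) 0, ?_⟩
  have hK : IsCompact ((Subtype.val : U → P) ⁻¹' tsupport χ) := by
    rw [Subtype.isCompact_iff]
    have himg : Subtype.val '' ((Subtype.val : U → P) ⁻¹' tsupport χ) = tsupport χ := by
      rw [Set.image_preimage_eq_inter_range, Subtype.range_coe,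
        Set.inter_eq_self_of_subset_left hχU]
    rw [himg]
    exact hχc
  have hsub : tsupport (fun x : U => χ x * g x) ⊆ (Subtype.val : U → P) ⁻¹' tsupport χ :=
    closure_minimal (fun x hx => subset_closure (left_ne_zero_of_mul hx))
      ((isClosed_tsupport χ).preimage continuous_subtype_val)
  exact ContMDiff.extend_zero (hK.of_isClosed_subset isClosed_closure hsub)
    ((hχ.comp contMDiff_subtype_val).mul g.contMDiff)

theorem extBump_apply_of_mem (hχ : ContMDiff I 𝓘(ℝ, ℝ) (⊤ : ℕ∞) χ)
    (hχc : HasCompactSupport χ) (hχU : tsupport χ ⊆ (U : Set P))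
    (g : ContMDiffMap I 𝓘(ℝ, ℝ) U ℝ (⊤ : ℕ∞)) {x : P} (hx : x ∈ U) :
    extBump hχ hχc hχU g x = χ x * g ⟨x, hx⟩ := by
  show Function.extend Subtype.val (fun x : U => χ x * g x) 0 x = _
  exact Subtype.val_injective.extend_apply _ _ ⟨x, hx⟩

theorem extBump_apply_of_not_mem (hχ : ContMDiff I 𝓘(ℝ, ℝ) (⊤ : ℕ∞) χ)
    (hχc : HasCompactSupport χ) (hχU : tsupport χ ⊆ (U : Set P))
    (g : ContMDiffMap I 𝓘(ℝ, ℝ) U ℝ (⊤ : ℕ∞)) {x : P} (hx : x ∉ U) :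
    extBump hχ hχc hχU g x = 0 := by
  show Function.extend Subtype.val (fun x : U => χ x * g x) 0 x = 0
  rw [Function.extend_apply' _ _ _ (by rintro ⟨a, rfl⟩; exact hx a.2)]
  rfl

end Aux

theorem isUnit_of_algHom_eq_one {A : Type} [CommRing A] [Algebra ℝ A] [IsLocalRing A]
    (ρ : A →ₐ[ℝ] ℝ) {a : A} (h : ρ a = 1) : IsUnit a := by
  by_contra hu
  have hsurj : Function.Surjective ρ := fun r => ⟨algebraMap ℝ A r, ρ.commutes r⟩
  have hker : RingHom.ker (ρ : A →+* ℝ) = IsLocalRing.maximalIdeal A :=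
    IsLocalRing.eq_maximalIdeal (RingHom.ker_isMaximal_of_surjective _ hsurj)
  have hm : a ∈ IsLocalRing.maximalIdeal A := hu
  rw [← hker, RingHom.mem_ker] at hm
  rw [show ((ρ : A →+* ℝ) a) = ρ a from rfl, h] at hm
  exact one_ne_zero hm

/-- Let `P` be a smooth manifold (finite-dimensional, Hausdorff,
paracompact), `𝒰 ⊆ P` an open subset with its induced smooth manifold structure, `p ∈ 𝒰`, and
`A` a local algebra with residue homomorphism `0_A : A → ℝ`.  Then the map sending an
identity-preserving `ℝ`-algebra homomorphism `u : C^∞(𝒰) → A` with `0_A ∘ u = ev_p` to the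
homomorphism `f ↦ u(f|_𝒰)` on `C^∞(P)` is a bijection from the set
`A_p𝒰 = {u : C^∞(𝒰) → A | 0_A ∘ u = ev_p}` onto `A_pP = {v : C^∞(P) → A | 0_A ∘ v = ev_p}`. -/
theorem pointsProches_open_inclusion_bijective
    (E : Type) [NormedAddCommGroup E] [NormedSpace ℝ E] [FiniteDimensional ℝ E]
    (H : Type) [TopologicalSpace H] (I : ModelWithCorners ℝ E H)
    (P : Type) [TopologicalSpace P] [ChartedSpace H P] [IsManifold I (⊤ : ℕ∞) P]
    [T2Space P] [ParacompactSpace P]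
    (U : Opens P) (p : P) (hp : p ∈ U)
    (A : Type) [CommRing A] [Algebra ℝ A] [FiniteDimensional ℝ A] [IsLocalRing A]
    (hres : Nonempty (IsLocalRing.ResidueField A ≃ₐ[ℝ] ℝ))
    (ρ : A →ₐ[ℝ] ℝ) :
    Set.BijOn
      (fun u : (ContMDiffMap I 𝓘(ℝ, ℝ) U ℝ (⊤ : ℕ∞)) →ₐ[ℝ] A =>
        u.comp (smoothRestrictAlgHom E H I P U))
      {u : (ContMDiffMap I 𝓘(ℝ, ℝ) U ℝ (⊤ : ℕ∞)) →ₐ[ℝ] A |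
        ∀ g : ContMDiffMap I 𝓘(ℝ, ℝ) U ℝ (⊤ : ℕ∞), ρ (u g) = g ⟨p, hp⟩}
      {v : (ContMDiffMap I 𝓘(ℝ, ℝ) P ℝ (⊤ : ℕ∞)) →ₐ[ℝ] A |
        ∀ f : ContMDiffMap I 𝓘(ℝ, ℝ) P ℝ (⊤ : ℕ∞), ρ (v f) = f p} := by
  classical
  obtain ⟨χ, -, hχU⟩ :=
    ((SmoothBumpFunction.nhds_basis_tsupport (I := I) p).mem_iff).1 (U.isOpen.mem_nhds hp)
  have hχ : ContMDiff I 𝓘(ℝ, ℝ) (⊤ : ℕ∞) (χ : P → ℝ) := χ.contMDiff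
  have hχc : HasCompactSupport (χ : P → ℝ) := χ.hasCompactSupport
  set R := smoothRestrictAlgHom E H I P U with hRdef
  let Eb : ContMDiffMap I 𝓘(ℝ, ℝ) U ℝ (⊤ : ℕ∞) → ContMDiffMap I 𝓘(ℝ, ℝ) P ℝ (⊤ : ℕ∞) :=
    extBump hχ hχc hχU
  let χP : ContMDiffMap I 𝓘(ℝ, ℝ) P ℝ (⊤ : ℕ∞) := ⟨χ, hχ⟩
  -- pointwise identities
  have h1 : Eb 1 = χP := by
    ext x
    by_cases hx : x ∈ U
    · rw [show Eb 1 x = χ x * (1 : ContMDiffMap I 𝓘(ℝ, ℝ) U ℝ (⊤ : ℕ∞)) ⟨x, hx⟩ from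
        extBump_apply_of_mem hχ hχc hχU 1 hx]
      show χ x * 1 = χ x
      rw [mul_one]
    · rw [show Eb 1 x = 0 from extBump_apply_of_not_mem hχ hχc hχU 1 hx]
      exact (image_eq_zero_of_notMem_tsupport (fun h => hx (hχU h))).symm
  have hmul : ∀ g₁ g₂, Eb g₁ * Eb g₂ = χP * Eb (g₁ * g₂) := by
    intro g₁ g₂
    ext x
    show Eb g₁ x * Eb g₂ x = χ x * Eb (g₁ * g₂) x
    by_cases hx : x ∈ U
    · rw [extBump_apply_of_mem hχ hχc hχU _ hx, extBump_apply_of_mem hχ hχc hχU _ hx,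
        extBump_apply_of_mem hχ hχc hχU _ hx]
      show (χ x * g₁ ⟨x, hx⟩) * (χ x * g₂ ⟨x, hx⟩) = χ x * (χ x * (g₁ ⟨x, hx⟩ * g₂ ⟨x, hx⟩))
      ring
    · rw [extBump_apply_of_not_mem hχ hχc hχU _ hx, extBump_apply_of_not_mem hχ hχc hχU _ hx,
        extBump_apply_of_not_mem hχ hχc hχU _ hx]
      simp
  have hadd : ∀ g₁ g₂, Eb (g₁ + g₂) = Eb g₁ + Eb g₂ := by
    intro g₁ g₂
    ext x
    show Eb (g₁ + g₂) x = Eb g₁ x + Eb g₂ x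
    by_cases hx : x ∈ U
    · rw [extBump_apply_of_mem hχ hχc hχU _ hx, extBump_apply_of_mem hχ hχc hχU _ hx,
        extBump_apply_of_mem hχ hχc hχU _ hx]
      show χ x * (g₁ ⟨x, hx⟩ + g₂ ⟨x, hx⟩) = χ x * g₁ ⟨x, hx⟩ + χ x * g₂ ⟨x, hx⟩
      ring
    · rw [extBump_apply_of_not_mem hχ hχc hχU _ hx, extBump_apply_of_not_mem hχ hχc hχU _ hx,
        extBump_apply_of_not_mem hχ hχc hχU _ hx]
      rw [add_zero]
  have h0 : Eb 0 = 0 := by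
    ext x
    show Eb 0 x = 0
    by_cases hx : x ∈ U
    · rw [extBump_apply_of_mem hχ hχc hχU _ hx]
      show χ x * 0 = 0
      rw [mul_zero]
    · exact extBump_apply_of_not_mem hχ hχc hχU _ hx
  have halg : ∀ r : ℝ, Eb (algebraMap ℝ (ContMDiffMap I 𝓘(ℝ, ℝ) U ℝ (⊤ : ℕ∞)) r) = r • χP := by
    intro r
    ext x
    show Eb _ x = r • χ x
    by_cases hx : x ∈ U
    · rw [extBump_apply_of_mem hχ hχc hχU _ hx]
      show χ x * r = r • χ x
      rw [smul_eq_mul, mul_comm]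
    · rw [extBump_apply_of_not_mem hχ hχc hχU _ hx]
      have : χ x = 0 := image_eq_zero_of_notMem_tsupport (fun h => hx (hχU h))
      rw [this, smul_eq_mul, mul_zero]
  have hres' : ∀ f, Eb (R f) = χP * f := by
    intro f
    ext x
    show Eb (R f) x = χ x * f x
    by_cases hx : x ∈ U
    · rw [extBump_apply_of_mem hχ hχc hχU _ hx]
      rfl
    · rw [extBump_apply_of_not_mem hχ hχc hχU _ hx]
      have : χ x = 0 := image_eq_zero_of_notMem_tsupport (fun h => hx (hχU h))
      rw [this, zero_mul]
  have hresE : ∀ g, R (Eb g) = R χP * g := by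
    intro g
    ext x
    show Eb g x.val = χ x.val * g x
    rw [extBump_apply_of_mem hχ hχc hχU _ x.2]
  have hχp1 : (χ : P → ℝ) p = 1 := χ.eq_one
  constructor
  · -- MapsTo
    intro u hu f
    show ρ (u (R f)) = f p
    exact hu (R f)
  constructor
  · -- InjOn
    intro u₁ h₁ u₂ h₂ h
    have hb : u₁ (R χP) = u₂ (R χP) := DFunLike.congr_fun h χP
    have hbu : IsUnit (u₁ (R χP)) := by
      apply isUnit_of_algHom_eq_one ρ
      rw [h₁ (R χP)]
      show (χ : P → ℝ) p = 1
      exact hχp1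
    ext g
    have hg : u₁ (R (Eb g)) = u₂ (R (Eb g)) := DFunLike.congr_fun h (Eb g)
    rw [hresE, map_mul, map_mul, ← hb] at hg
    exact hbu.mul_left_cancel hg
  · -- SurjOn
    intro v hv
    have ha1 : ρ (v χP) = 1 := by rw [hv χP]; exact hχp1
    have ha : IsUnit (v χP) := isUnit_of_algHom_eq_one ρ ha1
    set a : A := v χP with hadef
    let α : A := ↑ha.unit⁻¹
    have hαa : α * a = 1 := by
      rw [show a = ↑ha.unit from (ha.unit_spec).symm]
      exact Units.inv_mul _
    have hρα : ρ α = 1 := by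
      have h' : ρ α * ρ a = 1 := by rw [← map_mul, hαa, map_one]
      rwa [ha1, mul_one] at h'
    refine ⟨{ toFun := fun g => α * v (Eb g)
              map_one' := by show α * v (Eb 1) = 1; rw [h1, ← hadef, hαa]
              map_mul' := fun g₁ g₂ => by
                show α * v (Eb (g₁ * g₂)) = (α * v (Eb g₁)) * (α * v (Eb g₂))
                have h2 : v (Eb g₁) * v (Eb g₂) = a * v (Eb (g₁ * g₂)) := by
                  rw [← map_mul, hmul g₁ g₂, map_mul]
                symm
                calc (α * v (Eb g₁)) * (α * v (Eb g₂))
                    = α * α * (v (Eb g₁) * v (Eb g₂)) := mul_mul_mul_comm _ _ _ _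
                  _ = α * α * (a * v (Eb (g₁ * g₂))) := by rw [h2]
                  _ = (α * a) * (α * v (Eb (g₁ * g₂))) := mul_mul_mul_comm _ _ _ _
                  _ = α * v (Eb (g₁ * g₂)) := by rw [hαa, one_mul]
              map_zero' := by show α * v (Eb 0) = 0; rw [h0, map_zero, mul_zero]
              map_add' := fun g₁ g₂ => by
                show α * v (Eb (g₁ + g₂)) = α * v (Eb g₁) + α * v (Eb g₂)
                rw [hadd, map_add, mul_add]
              commutes' := fun r => by
                show α * v (Eb (algebraMap ℝ _ r)) = algebraMap ℝ A r
                rw [halg r, map_smul, ← hadef, mul_smul_comm, hαa,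
                  Algebra.algebraMap_eq_smul_one] },
      ?_, ?_⟩
    · intro g
      show ρ (α * v (Eb g)) = g ⟨p, hp⟩
      rw [map_mul, hρα, one_mul, hv (Eb g),
        show Eb g p = χ p * g ⟨p, hp⟩ from extBump_apply_of_mem hχ hχc hχU g hp,
        hχp1, one_mul]
    · ext f
      show α * v (Eb (R f)) = v f
      rw [hres' f, map_mul, ← hadef, ← mul_assoc, hαa, one_mul]
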